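/- For every real number x with |x| ≤ 1, (√(1−x) − √(1+x))² = Σ_{k=1}^{∞} C(2(k−1), k−1) · (4 / (2^{2k} · k)) · x^{2k}, where C(n, m) denotes the binomial coefficient. -/

import Mathlib

open Finset

noncomputable def aSeq (n : ℕ) : ℝ := (Nat.centralBinom n : ℝ) / 4 ^ n

noncomputable def cSeq (n : ℕ) : ℝ := (catalan n : ℝ) / 4 ^ n

lemma aSeq_nonneg (n : ℕ) : 0 ≤ aSeq n := by unfold aSeq; positivity

lemma cSeq_nonneg (n : ℕ) : 0 ≤ cSeq n := by unfold cSeq; positivity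

lemma cb_real (n : ℕ) : (Nat.centralBinom n : ℝ) = (n + 1) * catalan n := by
  rw [← succ_mul_catalan_eq_centralBinom]; push_cast; ring

lemma cb_succ (n : ℕ) :
    (Nat.centralBinom (n + 1) : ℝ) = 2 * (2 * n + 1) * Nat.centralBinom n / (n + 1) := by
  have h' : ((n:ℝ) + 1) * Nat.centralBinom (n + 1) = 2 * (2 * n + 1) * Nat.centralBinom n := by
    exact_mod_cast congrArg (Nat.cast : ℕ → ℝ) (Nat.succ_mul_centralBinom_succ n)
  field_simp
  linarith

lemma aSeq_step (n : ℕ) : aSeq (n + 1) * (2 * (n:ℝ) + 2) = aSeq n * (2 * n + 1) := by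
  simp only [aSeq, pow_succ, cb_succ]
  have hn : ((n:ℝ) + 1) ≠ 0 := by positivity
  have h4 : (4:ℝ) ^ n ≠ 0 := by positivity
  field_simp
  ring

lemma cSeq_eq (n : ℕ) : cSeq n = 2 * (aSeq n - aSeq (n + 1)) := by
  have h := aSeq_step n
  have hc : cSeq n = aSeq n / (n + 1) := by
    simp only [cSeq, aSeq, cb_real]
    have hn : ((n:ℝ) + 1) ≠ 0 := by positivity
    field_simp
  have hn : (0:ℝ) < 2 * n + 2 := by positivity
  rw [hc]
  have : aSeq (n + 1) = aSeq n * (2 * n + 1) / (2 * n + 2) := by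
    field_simp at h ⊢; linarith
  rw [this]
  field_simp
  ring

lemma aSeq_sq_le (n : ℕ) : aSeq n ^ 2 * ((n:ℝ) + 1) ≤ 1 := by
  induction n with
  | zero => simp [aSeq]
  | succ n ih =>
    have h := aSeq_step n
    have h2 : aSeq (n+1) ^ 2 * (2 * (n:ℝ) + 2) ^ 2 = aSeq n ^ 2 * (2 * n + 1) ^ 2 := by
      have := congrArg (fun y : ℝ => y ^ 2) h
      simpa [mul_pow] using this
    have hnn : (0:ℝ) ≤ aSeq n ^ 2 := by positivity
    have hpoly : ((2:ℝ) * n + 1) ^ 2 * (n + 2) ≤ (n + 1) * (2 * n + 2) ^ 2 := by nlinarith [sq_nonneg ((n:ℝ))]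
    push_cast
    nlinarith [h2, ih, sq_nonneg (aSeq (n+1)), sq_nonneg ((n:ℝ)+1)]

lemma aSeq_tendsto : Filter.Tendsto aSeq Filter.atTop (nhds 0) := by
  have hle : ∀ n : ℕ, aSeq n ≤ Real.sqrt (1 / (n + 1)) := by
    intro n
    have h1 := aSeq_sq_le n
    have h0 := aSeq_nonneg n
    have hp : (0:ℝ) < (n:ℝ) + 1 := by positivity
    have hsq : aSeq n ^ 2 ≤ 1 / ((n:ℝ) + 1) := by
      rw [le_div_iff₀ hp]; exact h1
    nlinarith [Real.sq_sqrt (show (0:ℝ) ≤ 1 / ((n:ℝ) + 1) by positivity),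
      Real.sqrt_nonneg (1 / ((n:ℝ) + 1))]
  have h2 : Filter.Tendsto (fun n : ℕ => Real.sqrt (1 / (n + 1))) Filter.atTop (nhds 0) := by
    have := (tendsto_one_div_add_atTop_nhds_zero_nat).sqrt
    simpa using this
  exact tendsto_of_tendsto_of_tendsto_of_le_of_le tendsto_const_nhds h2 aSeq_nonneg hle

lemma sum_cSeq (n : ℕ) : ∑ i ∈ range n, cSeq i = 2 - 2 * aSeq n := by
  have h : ∑ i ∈ range n, cSeq i = ∑ i ∈ range n, 2 * (aSeq i - aSeq (i + 1)) :=
    Finset.sum_congr rfl fun i _ => cSeq_eq i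
  have h0 : aSeq 0 = 1 := by simp [aSeq]
  rw [h, ← Finset.mul_sum, Finset.sum_range_sub' aSeq n, h0]
  ring

lemma hasSum_cSeq : HasSum cSeq 2 := by
  have hsummable : Summable cSeq := by
    apply summable_of_sum_range_le (c := 2) cSeq_nonneg
    intro n
    rw [sum_cSeq]
    nlinarith [aSeq_nonneg n]
  obtain ⟨s, hs⟩ := hsummable
  have h1 : Filter.Tendsto (fun n => ∑ i ∈ range n, cSeq i) Filter.atTop (nhds s) :=
    hs.tendsto_sum_nat
  have h2 : Filter.Tendsto (fun n => ∑ i ∈ range n, cSeq i) Filter.atTop (nhds 2) := by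
    simp only [sum_cSeq]
    have h3 := aSeq_tendsto.const_mul 2
    have h4 := (tendsto_const_nhds (x := (2:ℝ)) (f := Filter.atTop (α := ℕ))).sub h3
    simpa using h4
  rwa [tendsto_nhds_unique h1 h2] at hs


/-- For `|x| ≤ 1`,
`(√(1-x) - √(1+x))² = Σ_{k=1}^∞ C(2(k-1), k-1) · (4 / (2^{2k} k)) · x^{2k}`.
The sum over `k ≥ 1` is reindexed as a sum over `k : ℕ` via `k ↦ k + 1`. -/
theorem sqrt_diff_sq_series (x : ℝ) (hx : |x| ≤ 1) :
    HasSum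
      (fun k : ℕ =>
        (Nat.choose (2 * k) k : ℝ) * (4 / (2 ^ (2 * (k + 1)) * (k + 1))) * x ^ (2 * (k + 1)))
      ((Real.sqrt (1 - x) - Real.sqrt (1 + x)) ^ 2) := by
  obtain ⟨hxl, hxr⟩ := abs_le.mp hx
  set t : ℝ := x ^ 2 with ht
  have ht0 : 0 ≤ t := sq_nonneg x
  have ht1 : t ≤ 1 := by nlinarith
  set f : ℕ → ℝ := fun k => cSeq k * t ^ (k + 1) with hf
  -- the given function equals f
  have hfun : (fun k : ℕ =>
      (Nat.choose (2 * k) k : ℝ) * (4 / (2 ^ (2 * (k + 1)) * (k + 1))) * x ^ (2 * (k + 1))) = f := by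
    funext k
    have h1 : ((2 * k).choose k : ℝ) = ((k:ℝ) + 1) * catalan k := by
      rw [← Nat.centralBinom_eq_two_mul_choose, cb_real]
    have h2 : (2:ℝ) ^ (2 * (k + 1)) = 4 ^ (k + 1) := by
      rw [pow_mul]; norm_num
    have h3 : x ^ (2 * (k + 1)) = t ^ (k + 1) := by rw [pow_mul, ht]
    have hk : ((k:ℝ) + 1) ≠ 0 := by positivity
    have h4 : (4:ℝ) ^ k ≠ 0 := by positivity
    simp only [hf, cSeq, h1, h2, h3, pow_succ]
    field_simp
  have hnn : ∀ k, 0 ≤ f k := fun k => by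
    have := cSeq_nonneg k; positivity
  have hfle : ∀ k, f k ≤ cSeq k := by
    intro k
    have hp : t ^ (k + 1) ≤ 1 := pow_le_one₀ ht0 ht1
    have := cSeq_nonneg k
    calc f k = cSeq k * t ^ (k + 1) := rfl
      _ ≤ cSeq k * 1 := by apply mul_le_mul_of_nonneg_left hp this
      _ = cSeq k := mul_one _
  have hsummable : Summable f := hasSum_cSeq.summable.of_nonneg_of_le hnn hfle
  set S : ℝ := ∑' k, f k with hSdef
  have hS : HasSum f S := hsummable.hasSum
  have hSle : S ≤ 2 := by
    have := Summable.tsum_le_tsum hfle hsummable hasSum_cSeq.summable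
    rwa [hasSum_cSeq.tsum_eq] at this
  -- Cauchy product
  have hnorm : Summable fun k => ‖f k‖ := by
    simpa [Real.norm_eq_abs, abs_of_nonneg (hnn _)] using hsummable
  have hCauchy : S * S = ∑' n, ∑ ij ∈ Finset.HasAntidiagonal.antidiagonal n, f ij.1 * f ij.2 :=
    tsum_mul_tsum_eq_tsum_sum_antidiagonal_of_summable_norm hnorm hnorm
  have inner : ∀ n : ℕ, ∑ ij ∈ Finset.HasAntidiagonal.antidiagonal n, f ij.1 * f ij.2 = 4 * f (n + 1) := by
    intro n
    have step : ∀ ij ∈ Finset.HasAntidiagonal.antidiagonal n,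
        f ij.1 * f ij.2 = ((catalan ij.1 : ℝ) * catalan ij.2) * (t ^ (n + 2) / 4 ^ n) := by
      intro ij hij
      have hij' : ij.1 + ij.2 = n := Finset.HasAntidiagonal.mem_antidiagonal.mp hij
      have e1 : t ^ (ij.1 + 1) * t ^ (ij.2 + 1) = t ^ (n + 2) := by
        rw [← pow_add]; congr 1; omega
      have e2 : ((4:ℝ) ^ ij.1) * 4 ^ ij.2 = 4 ^ n := by rw [← pow_add, hij']
      calc f ij.1 * f ij.2
          = ((catalan ij.1 : ℝ) * catalan ij.2) *
            ((t ^ (ij.1 + 1) * t ^ (ij.2 + 1)) / (4 ^ ij.1 * 4 ^ ij.2)) := by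
            simp only [hf, cSeq]; ring
        _ = ((catalan ij.1 : ℝ) * catalan ij.2) * (t ^ (n + 2) / 4 ^ n) := by rw [e1, e2]
    rw [Finset.sum_congr rfl step, ← Finset.sum_mul]
    have hc : ∑ ij ∈ Finset.HasAntidiagonal.antidiagonal n, ((catalan ij.1 : ℝ) * catalan ij.2)
        = (catalan (n + 1) : ℝ) := by
      rw [catalan_succ']
      push_cast
      rfl
    rw [hc]
    simp only [hf, cSeq]
    have h4 : (4:ℝ) ^ n ≠ 0 := by positivity
    rw [pow_succ]
    field_simp
    ring
  have hshift : ∑' n, ∑ ij ∈ Finset.HasAntidiagonal.antidiagonal n, f ij.1 * f ij.2 = 4 * (S - t) := by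
    rw [tsum_congr inner, tsum_mul_left]
    have hsplit : S = f 0 + ∑' n, f (n + 1) := by
      rw [hSdef]
      exact Summable.tsum_eq_zero_add hsummable
    have hf0 : f 0 = t := by simp [hf, cSeq]
    rw [hsplit, hf0]
    ring
  have hquad : S * S = 4 * (S - t) := by rw [hCauchy, hshift]
  have key : (2 - S) ^ 2 = 4 * (1 - t) := by nlinarith [hquad]
  -- compute the target
  have h1x : (0:ℝ) ≤ 1 - x := by linarith
  have h2x : (0:ℝ) ≤ 1 + x := by linarith
  have hsq4 : Real.sqrt (4 * (1 - t)) = 2 * Real.sqrt (1 - t) := by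
    rw [show (4:ℝ) * (1 - t) = 2 ^ 2 * (1 - t) by ring, Real.sqrt_mul (by positivity),
      Real.sqrt_sq (by norm_num : (0:ℝ) ≤ 2)]
  have htarget : (Real.sqrt (1 - x) - Real.sqrt (1 + x)) ^ 2 = 2 - Real.sqrt (4 * (1 - t)) := by
    rw [sub_sq, Real.sq_sqrt h1x, Real.sq_sqrt h2x, mul_assoc, ← Real.sqrt_mul h1x,
      show (1 - x) * (1 + x) = 1 - t by rw [ht]; ring, hsq4]
    ring
  have hfin : Real.sqrt (4 * (1 - t)) = 2 - S := by
    rw [← key, Real.sqrt_sq (by linarith : (0:ℝ) ≤ 2 - S)]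
  have : (Real.sqrt (1 - x) - Real.sqrt (1 + x)) ^ 2 = S := by
    rw [htarget, hfin]; ring
  rw [this, hfun]
  exact hS
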